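/- For every h ∈ ℝ, the set { (x,y,z) ∈ ℝ³ : x² + y² + z² = 1 and y² − x(1−z) = h(1−z)² } is homeomorphic to the circle S¹. -/

import Mathlib

set_option maxRecDepth 8000

open Set

noncomputable section DegenerateLevelSetAux

/-- The denominator appearing in the inverse-stereographic parametrization. -/
def Nden (h u v : ℝ) : ℝ := (1 + v - h * (1 - v)) ^ 2 + u ^ 2 + (1 - v) ^ 2

lemma Nden_pos (h u v : ℝ) : 0 < Nden h u v := by
  rcases eq_or_ne v 1 with rfl | hv
  · simp [Nden]; positivity
  · have h1 : 1 - v ≠ 0 := sub_ne_zero.mpr (Ne.symm hv)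
    unfold Nden; positivity

/-- Map from the circle (coordinates `(u,v)`) to the level set in `ℝ³`. -/
def gmap (h u v : ℝ) : ℝ × ℝ × ℝ :=
  (2 * (1 + v - h * (1 - v)) * (1 - v) / Nden h u v,
   2 * u * (1 - v) / Nden h u v,
   1 - 2 * (1 - v) ^ 2 / Nden h u v)

/-- Map from the level set back to the circle. -/
def fmap (w : ℝ × ℝ × ℝ) : ℝ × ℝ :=
  if w.2.2 = 1 then (0, 1)
  else (2 * w.2.1 * (1 - w.2.2) / (w.2.1 ^ 2 + (1 - w.2.2) ^ 2),
        (w.2.1 ^ 2 - (1 - w.2.2) ^ 2) / (w.2.1 ^ 2 + (1 - w.2.2) ^ 2))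

lemma fmap_apply (x y z : ℝ) (hz : z ≠ 1) :
    fmap (x, y, z) = (2 * y * (1 - z) / (y ^ 2 + (1 - z) ^ 2),
        (y ^ 2 - (1 - z) ^ 2) / (y ^ 2 + (1 - z) ^ 2)) := by
  simp [fmap, hz]

lemma gmap_mem (h u v : ℝ) (hc : u ^ 2 + v ^ 2 = 1) :
    (gmap h u v).1 ^ 2 + (gmap h u v).2.1 ^ 2 + (gmap h u v).2.2 ^ 2 = 1 ∧
    (gmap h u v).2.1 ^ 2 - (gmap h u v).1 * (1 - (gmap h u v).2.2) =
      h * (1 - (gmap h u v).2.2) ^ 2 := by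
  have hN := (Nden_pos h u v).ne'
  have hNdef : Nden h u v = (1 + v - h * (1 - v)) ^ 2 + u ^ 2 + (1 - v) ^ 2 := rfl
  unfold gmap
  set N := Nden h u v with hNs
  clear_value N
  constructor
  · field_simp
    linear_combination (-(4 * (1 - v) ^ 2)) * hNdef
  · field_simp
    linear_combination (4 * (1 - v) ^ 2) * hc

lemma fmap_circle (w : ℝ × ℝ × ℝ) : (fmap w).1 ^ 2 + (fmap w).2 ^ 2 = 1 := by
  obtain ⟨x, y, z⟩ := w
  rcases eq_or_ne z 1 with rfl | hz
  · simp [fmap]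
  · have hz' : 1 - z ≠ 0 := sub_ne_zero.mpr (Ne.symm hz)
    have hM : y ^ 2 + (1 - z) ^ 2 ≠ 0 := by positivity
    rw [fmap_apply _ _ _ hz]
    field_simp
    ring

lemma fmap_gmap (h u v : ℝ) (hc : u ^ 2 + v ^ 2 = 1) : fmap (gmap h u v) = (u, v) := by
  rcases eq_or_ne v 1 with rfl | hv
  · have hu : u = 0 := by nlinarith [sq_nonneg u]
    subst hu
    have : gmap h 0 1 = (0, 0, 1) := by simp [gmap, Nden]
    rw [this]
    simp [fmap]
  · have h1 : 1 - v ≠ 0 := sub_ne_zero.mpr (Ne.symm hv)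
    have hN := (Nden_pos h u v).ne'
    have hNdef : Nden h u v = (1 + v - h * (1 - v)) ^ 2 + u ^ 2 + (1 - v) ^ 2 := rfl
    have hz : 1 - 2 * (1 - v) ^ 2 / Nden h u v ≠ 1 := by
      intro hzz
      have h0 : 2 * (1 - v) ^ 2 / Nden h u v = 0 := by linarith
      have h0' := (div_eq_zero_iff.mp h0).resolve_right hN
      simp [pow_eq_zero_iff, sub_eq_zero] at h0'
      exact hv h0'.symm
    rw [show gmap h u v = (2 * (1 + v - h * (1 - v)) * (1 - v) / Nden h u v,
        2 * u * (1 - v) / Nden h u v, 1 - 2 * (1 - v) ^ 2 / Nden h u v) from rfl,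
      fmap_apply _ _ _ hz]
    set N := Nden h u v with hNs
    clear_value N
    have hMne : (2 * u * (1 - v) / N) ^ 2 + (1 - (1 - 2 * (1 - v) ^ 2 / N)) ^ 2 ≠ 0 := by
      have hrw : (1 : ℝ) - (1 - 2 * (1 - v) ^ 2 / N) = 2 * (1 - v) ^ 2 / N := by ring
      rw [hrw]
      have hNpos : 0 < N := hNs ▸ Nden_pos h u v
      positivity
    refine Prod.ext ?_ ?_
    · show 2 * (2 * u * (1 - v) / N) * (1 - (1 - 2 * (1 - v) ^ 2 / N)) /
        ((2 * u * (1 - v) / N) ^ 2 + (1 - (1 - 2 * (1 - v) ^ 2 / N)) ^ 2) = u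
      rw [div_eq_iff hMne]
      field_simp
      linear_combination (-(4 * u * (1 - v) ^ 2)) * hc
    · show ((2 * u * (1 - v) / N) ^ 2 - (1 - (1 - 2 * (1 - v) ^ 2 / N)) ^ 2) /
        ((2 * u * (1 - v) / N) ^ 2 + (1 - (1 - 2 * (1 - v) ^ 2 / N)) ^ 2) = v
      rw [div_eq_iff hMne]
      field_simp
      linear_combination (4 * (1 - v) ^ 3) * hc

lemma gmap_fmap (h : ℝ) (w : ℝ × ℝ × ℝ)
    (hs : w.1 ^ 2 + w.2.1 ^ 2 + w.2.2 ^ 2 = 1)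
    (he : w.2.1 ^ 2 - w.1 * (1 - w.2.2) = h * (1 - w.2.2) ^ 2) :
    gmap h (fmap w).1 (fmap w).2 = w := by
  obtain ⟨x, y, z⟩ := w
  simp only at hs he
  rcases eq_or_ne z 1 with rfl | hz
  · have hx : x = 0 := by nlinarith [sq_nonneg x, sq_nonneg y]
    have hy : y = 0 := by nlinarith [sq_nonneg x, sq_nonneg y]
    subst hx; subst hy
    simp [fmap, gmap, Nden]
  · have hz' : 1 - z ≠ 0 := sub_ne_zero.mpr (Ne.symm hz)
    have hM : y ^ 2 + (1 - z) ^ 2 ≠ 0 := by positivity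
    rw [fmap_apply _ _ _ hz]
    have hNkey : Nden h (2 * y * (1 - z) / (y ^ 2 + (1 - z) ^ 2))
        ((y ^ 2 - (1 - z) ^ 2) / (y ^ 2 + (1 - z) ^ 2)) =
        8 * (1 - z) ^ 3 / (y ^ 2 + (1 - z) ^ 2) ^ 2 := by
      unfold Nden
      field_simp
      linear_combination (4 * (1 - z) ^ 2) * hs +
        (4 * y ^ 2 - 4 * h * (1 - z) ^ 2 + 4 * x * (1 - z)) * he
    show gmap h _ _ = _
    unfold gmap
    rw [hNkey]
    refine Prod.ext ?_ (Prod.ext ?_ ?_)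
    · show 2 * (1 + (y ^ 2 - (1 - z) ^ 2) / (y ^ 2 + (1 - z) ^ 2) -
        h * (1 - (y ^ 2 - (1 - z) ^ 2) / (y ^ 2 + (1 - z) ^ 2))) *
        (1 - (y ^ 2 - (1 - z) ^ 2) / (y ^ 2 + (1 - z) ^ 2)) /
        (8 * (1 - z) ^ 3 / (y ^ 2 + (1 - z) ^ 2) ^ 2) = x
      field_simp
      linear_combination (8 * (1 - z) ^ 2) * he
    · show 2 * (2 * y * (1 - z) / (y ^ 2 + (1 - z) ^ 2)) *
        (1 - (y ^ 2 - (1 - z) ^ 2) / (y ^ 2 + (1 - z) ^ 2)) /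
        (8 * (1 - z) ^ 3 / (y ^ 2 + (1 - z) ^ 2) ^ 2) = y
      field_simp
      ring
    · show 1 - 2 * (1 - (y ^ 2 - (1 - z) ^ 2) / (y ^ 2 + (1 - z) ^ 2)) ^ 2 /
        (8 * (1 - z) ^ 3 / (y ^ 2 + (1 - z) ^ 2) ^ 2) = z
      field_simp
      ring

/-- Inclusion of a pair into `EuclideanSpace ℝ (Fin 2)`. -/
def toE (u v : ℝ) : EuclideanSpace ℝ (Fin 2) :=
  (WithLp.equiv 2 (Fin 2 → ℝ)).symm ![u, v]

@[simp] lemma toE_zero (u v : ℝ) : toE u v 0 = u := rfl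
@[simp] lemma toE_one (u v : ℝ) : toE u v 1 = v := rfl

lemma sphere_coords {c : EuclideanSpace ℝ (Fin 2)}
    (hc : c ∈ Metric.sphere (0 : EuclideanSpace ℝ (Fin 2)) 1) :
    (c 0) ^ 2 + (c 1) ^ 2 = 1 := by
  rw [mem_sphere_zero_iff_norm] at hc
  have h2 : ‖c‖ ^ 2 = 1 := by rw [hc]; norm_num
  rw [EuclideanSpace.norm_eq, Real.sq_sqrt (by positivity)] at h2
  simpa [Fin.sum_univ_two, Real.norm_eq_abs, sq_abs] using h2

lemma sphere_coords' {u v : ℝ} (hc : u ^ 2 + v ^ 2 = 1) :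
    toE u v ∈ Metric.sphere (0 : EuclideanSpace ℝ (Fin 2)) 1 := by
  rw [mem_sphere_zero_iff_norm, EuclideanSpace.norm_eq]
  have habs : ∀ i, ‖toE u v i‖ ^ 2 = toE u v i ^ 2 := fun i => by
    rw [Real.norm_eq_abs, sq_abs]
  rw [Fin.sum_univ_two, habs 0, habs 1, toE_zero, toE_one, hc, Real.sqrt_one]

lemma sphere_ext {c d : EuclideanSpace ℝ (Fin 2)} (h0 : c 0 = d 0) (h1 : c 1 = d 1) :
    c = d := by
  ext i
  fin_cases i <;> assumption

lemma continuous_gmap (h : ℝ) : Continuous (fun p : ℝ × ℝ => gmap h p.1 p.2) := by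
  have hden : Continuous (fun p : ℝ × ℝ => Nden h p.1 p.2) := by
    unfold Nden; fun_prop
  have hne : ∀ p : ℝ × ℝ, Nden h p.1 p.2 ≠ 0 := fun p => (Nden_pos h p.1 p.2).ne'
  unfold gmap
  exact Continuous.prodMk
      (Continuous.div (by fun_prop) hden hne)
      (Continuous.prodMk
        (Continuous.div (by fun_prop) hden hne)
        (continuous_const.sub (Continuous.div (by fun_prop) hden hne)))

end DegenerateLevelSetAux

/-- The compactified degenerate level set `Σ̄_{0,h}` (Casimir value `C = 0`): the subset
`{(x,y,z) ∈ S² : y² − x(1−z) = h(1−z)²}` of the unit sphere is homeomorphic to the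
circle `S¹`. -/
theorem degenerate_level_set_homeomorph_circle (h : ℝ) :
    Nonempty
      (({w : ℝ × ℝ × ℝ | w.1 ^ 2 + w.2.1 ^ 2 + w.2.2 ^ 2 = 1 ∧
          w.2.1 ^ 2 - w.1 * (1 - w.2.2) = h * (1 - w.2.2) ^ 2} :
          Set (ℝ × ℝ × ℝ)) ≃ₜ
        Metric.sphere (0 : EuclideanSpace ℝ (Fin 2)) 1) := by
  set S : Set (ℝ × ℝ × ℝ) := {w : ℝ × ℝ × ℝ | w.1 ^ 2 + w.2.1 ^ 2 + w.2.2 ^ 2 = 1 ∧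
      w.2.1 ^ 2 - w.1 * (1 - w.2.2) = h * (1 - w.2.2) ^ 2} with hS
  let E : (Metric.sphere (0 : EuclideanSpace ℝ (Fin 2)) 1 : Set (EuclideanSpace ℝ (Fin 2))) ≃ S :=
    { toFun := fun c => ⟨gmap h (c.1 0) (c.1 1), gmap_mem h _ _ (sphere_coords c.2)⟩
      invFun := fun w => ⟨toE (fmap w.1).1 (fmap w.1).2, sphere_coords' (fmap_circle w.1)⟩
      left_inv := fun c => by
        apply Subtype.ext
        have hfg := fmap_gmap h (c.1 0) (c.1 1) (sphere_coords c.2)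
        apply sphere_ext <;> simp [hfg]
      right_inv := fun w => by
        apply Subtype.ext
        show gmap h (toE (fmap w.1).1 (fmap w.1).2 0) (toE (fmap w.1).1 (fmap w.1).2 1) = w.1
        rw [toE_zero, toE_one]
        exact gmap_fmap h w.1 w.2.1 w.2.2
      }
  have hcont : Continuous E := by
    apply Continuous.subtype_mk
    exact (continuous_gmap h).comp
      (Continuous.prodMk
        (((EuclideanSpace.proj (0 : Fin 2)).continuous).comp continuous_subtype_val)
        (((EuclideanSpace.proj (1 : Fin 2)).continuous).comp continuous_subtype_val))
  exact ⟨(hcont.homeoOfEquivCompactToT2 (f := E)).symm⟩
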